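/- arXiv:2105.06561 — 2 statements merged into one kernel-verified Lean document; each statement's English description precedes it below -/
import Mathlib

section
/- In a Schelling game with |T1| ≥ 5 and |T2| ≥ 5 on an (x × y)-grid with x ≥ 4 and y ≥ 4, no swap-equilibrium is 2-edge-robust; i.e., for every swap-equilibrium v there exists a set S of at most 2 edges such that v is not a swap-equilibrium on G − S. -/
open SimpleGraph

variable {V : Type*}

/-- Utility of the agent occupying vertex `v` in graph `H` under type assignment `τ`:
the fraction of same-type agents among occupied neighbors (0 if no neighbors). -/
noncomputable def utility (H : SimpleGraph V) (τ : V → Bool) (v : V) : ℚ := by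
  classical
  exact if H.neighborSet v = ∅ then 0
    else ((H.neighborSet v ∩ {w | τ w = τ v}).ncard : ℚ) / ((H.neighborSet v).ncard : ℚ)

/-- The type function after the agents on vertices `i` and `j` exchange their vertices. -/
noncomputable def swapAt (τ : V → Bool) (i j : V) : V → Bool := fun v => by
  classical
  exact if v = i then τ j else if v = j then τ i else τ v

/-- The swap of the (distinct-type) agents on `i` and `j` strictly increases both utilities. -/
def ProfitableSwap (H : SimpleGraph V) (τ : V → Bool) (i j : V) : Prop :=
  τ i ≠ τ j ∧
  utility H τ i < utility H (swapAt τ i j) j ∧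
  utility H τ j < utility H (swapAt τ i j) i

/-- Swap-equilibrium: no profitable swap exists. -/
def IsSwapEq (H : SimpleGraph V) (τ : V → Bool) : Prop :=
  ∀ i j : V, ¬ ProfitableSwap H τ i j

/-- The `(x × y)`-grid graph: vertices `(a, b)` with `a < x`, `b < y`, adjacent iff at
`L1`-distance one. -/
def gridGraph (x y : ℕ) : SimpleGraph (Fin x × Fin y) where
  Adj u v := (u.1 = v.1 ∧ ((u.2 : ℕ) + 1 = (v.2 : ℕ) ∨ (v.2 : ℕ) + 1 = (u.2 : ℕ))) ∨
    (u.2 = v.2 ∧ ((u.1 : ℕ) + 1 = (v.1 : ℕ) ∨ (v.1 : ℕ) + 1 = (u.1 : ℕ)))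
  symm := by
    constructor
    intro u v h
    rcases h with ⟨h1, h2⟩ | ⟨h1, h2⟩
    · exact Or.inl ⟨h1.symm, h2.symm⟩
    · exact Or.inr ⟨h1.symm, h2.symm⟩
  loopless := by constructor; intro u h; rcases h with ⟨_, h⟩ | ⟨_, h⟩ <;> omega

section AuxiliaryLemmas

lemma utility_of_ne (H : SimpleGraph V) (τ : V → Bool) (v : V) (h : H.neighborSet v ≠ ∅) :
    utility H τ v
      = ((H.neighborSet v ∩ {w | τ w = τ v}).ncard : ℚ) / ((H.neighborSet v).ncard : ℚ) := by
  unfold utility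
  exact if_neg h

lemma utility_of_empty (H : SimpleGraph V) (τ : V → Bool) (v : V) (h : H.neighborSet v = ∅) :
    utility H τ v = 0 := by
  unfold utility
  exact if_pos h

private lemma bool3 : ∀ a b c : Bool, a ≠ c → b ≠ c → a = b := by decide

lemma profitable_builder [Fintype V] (H : SimpleGraph V) (τ : V → Bool) (p q r : V)
    (hne : (H.neighborSet p).Nonempty)
    (hall : ∀ w, w ∈ H.neighborSet p → τ w ≠ τ p)
    (hq : τ q ≠ τ p)
    (hqn : q ∉ H.neighborSet p)
    (hr : r ∈ H.neighborSet q) (hrt : τ r = τ p) :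
    ProfitableSwap H τ p q := by
  classical
  have hqp : q ≠ p := by rintro rfl; exact hq rfl
  have hpq : p ∉ H.neighborSet q := by
    intro h
    exact hqn (by rwa [mem_neighborSet, adj_comm, ← mem_neighborSet] at h)
  have hrp : r ≠ p := by rintro rfl; exact hpq hr
  have hrq : r ≠ q := by
    intro h; rw [h] at hr; exact H.irrefl hr
  set σ := swapAt τ p q with hσdef
  have hσp : σ p = τ q := by simp [hσdef, swapAt]
  have hσq : σ q = τ p := by simp [hσdef, swapAt, hqp]
  have hσw : ∀ w, w ≠ p → w ≠ q → σ w = τ w := by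
    intro w h1 h2; simp [hσdef, swapAt, h1, h2]
  have hNpne : H.neighborSet p ≠ ∅ := hne.ne_empty
  have hNqne' : (H.neighborSet q).Nonempty := ⟨r, hr⟩
  have hNqne : H.neighborSet q ≠ ∅ := hNqne'.ne_empty
  have hNpfin : (H.neighborSet p).Finite := Set.toFinite _
  have hNqfin : (H.neighborSet q).Finite := Set.toFinite _
  have hNppos : (0:ℚ) < ((H.neighborSet p).ncard : ℚ) := by
    exact_mod_cast (Set.ncard_pos hNpfin).mpr hne
  have hNqpos : (0:ℚ) < ((H.neighborSet q).ncard : ℚ) := by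
    exact_mod_cast (Set.ncard_pos hNqfin).mpr hNqne'
  -- utility H τ p = 0
  have hup : utility H τ p = 0 := by
    rw [utility_of_ne H τ p hNpne]
    have : H.neighborSet p ∩ {w | τ w = τ p} = ∅ := by
      ext w
      simp only [Set.mem_inter_iff, Set.mem_setOf_eq, Set.mem_empty_iff_false, iff_false,
        not_and]
      exact fun hw => hall w hw
    rw [this]
    simp
  -- utility H τ q < 1
  have huq : utility H τ q < 1 := by
    rw [utility_of_ne H τ q hNqne]
    rw [div_lt_one hNqpos]
    have hss : H.neighborSet q ∩ {w | τ w = τ q} ⊂ H.neighborSet q := by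
      constructor
      · exact Set.inter_subset_left
      · intro hsub
        have := hsub hr
        have h2 : τ r = τ q := (Set.mem_inter_iff ..).mp this |>.2
        rw [hrt] at h2
        exact hq h2.symm
    exact_mod_cast Set.ncard_lt_ncard hss hNqfin
  -- utility H σ p = 1
  have husp : utility H σ p = 1 := by
    rw [utility_of_ne H σ p hNpne]
    have : H.neighborSet p ∩ {w | σ w = σ p} = H.neighborSet p := by
      apply Set.inter_eq_self_of_subset_left
      intro w hw
      have hwp : w ≠ p := (H.adj_symm ((mem_neighborSet ..).mp hw)).ne
      have hwq : w ≠ q := by rintro rfl; exact hqn hw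
      have : σ w = τ w := hσw w hwp hwq
      simp only [Set.mem_setOf_eq, this, hσp]
      exact bool3 _ _ _ (hall w hw) hq
    rw [this]
    exact div_self (ne_of_gt hNppos)
  -- utility H σ q > 0
  have husq : 0 < utility H σ q := by
    rw [utility_of_ne H σ q hNqne]
    apply div_pos _ hNqpos
    have : r ∈ H.neighborSet q ∩ {w | σ w = σ q} := by
      refine ⟨hr, ?_⟩
      simp only [Set.mem_setOf_eq, hσw r hrp hrq, hσq, hrt]
    have hpos : 0 < (H.neighborSet q ∩ {w | σ w = σ q}).ncard :=
      (Set.ncard_pos (Set.toFinite _)).mpr ⟨r, this⟩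
    exact_mod_cast hpos
  exact ⟨Ne.symm hq, by rw [hup]; exact husq, by rw [husp]; exact huq⟩

private def vtx {x y : ℕ} (i j : ℕ) (hi : i < x) (hj : j < y) : Fin x × Fin y := (⟨i, hi⟩, ⟨j, hj⟩)

@[simp] private lemma vtx_fst {x y : ℕ} (i j : ℕ) (hi : i < x) (hj : j < y) :
    ((vtx i j hi hj).1 : ℕ) = i := rfl
@[simp] private lemma vtx_snd {x y : ℕ} (i j : ℕ) (hi : i < x) (hj : j < y) :
    ((vtx i j hi hj).2 : ℕ) = j := rfl

private lemma vtx_ext {x y : ℕ} {u v : Fin x × Fin y} (h1 : (u.1 : ℕ) = (v.1 : ℕ))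
    (h2 : (u.2 : ℕ) = (v.2 : ℕ)) : u = v :=
  Prod.ext (Fin.ext h1) (Fin.ext h2)

private lemma adj_val {x y : ℕ} {u v : Fin x × Fin y} :
    (gridGraph x y).Adj u v ↔
      (((u.1:ℕ) = (v.1:ℕ) ∧ ((u.2:ℕ) + 1 = (v.2:ℕ) ∨ (v.2:ℕ) + 1 = (u.2:ℕ))) ∨
       ((u.2:ℕ) = (v.2:ℕ) ∧ ((u.1:ℕ) + 1 = (v.1:ℕ) ∨ (v.1:ℕ) + 1 = (u.1:ℕ)))) := by
  show ((u.1 = v.1 ∧ _) ∨ (u.2 = v.2 ∧ _)) ↔ _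
  rw [Fin.ext_iff, Fin.ext_iff]

private lemma adj_cases {x y : ℕ} {p w : Fin x × Fin y} (h : (gridGraph x y).Adj p w) :
    ((w.1:ℕ) = (p.1:ℕ) ∧ (w.2:ℕ) = (p.2:ℕ) + 1) ∨
    ((w.1:ℕ) = (p.1:ℕ) ∧ (w.2:ℕ) + 1 = (p.2:ℕ)) ∨
    ((w.2:ℕ) = (p.2:ℕ) ∧ (w.1:ℕ) = (p.1:ℕ) + 1) ∨
    ((w.2:ℕ) = (p.2:ℕ) ∧ (w.1:ℕ) + 1 = (p.1:ℕ)) := by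
  rw [adj_val] at h
  omega

private def gkey {x y : ℕ} (v : Fin x × Fin y) : ℕ := (v.1 : ℕ) * y + (v.2 : ℕ)
private def gkey' {x y : ℕ} (v : Fin x × Fin y) : ℕ := (v.2 : ℕ) * x + (v.1 : ℕ)

private lemma gkey_lt_fst {x y : ℕ} {u v : Fin x × Fin y} (h : (u.1:ℕ) < (v.1:ℕ)) :
    gkey u < gkey v := by
  unfold gkey
  have h2 : (u.2 : ℕ) < y := u.2.2
  calc (u.1:ℕ) * y + (u.2:ℕ) < (u.1:ℕ) * y + y := by omega
    _ = ((u.1:ℕ) + 1) * y := by ring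
    _ ≤ (v.1:ℕ) * y := Nat.mul_le_mul_right y h
    _ ≤ (v.1:ℕ) * y + (v.2:ℕ) := Nat.le_add_right _ _

private lemma gkey_lt_snd {x y : ℕ} {u v : Fin x × Fin y} (h1 : (u.1:ℕ) = (v.1:ℕ))
    (h2 : (u.2:ℕ) < (v.2:ℕ)) : gkey u < gkey v := by
  unfold gkey; rw [h1]; omega

private lemma gkey'_lt_fst {x y : ℕ} {u v : Fin x × Fin y} (h : (u.2:ℕ) < (v.2:ℕ)) :
    gkey' u < gkey' v := by
  unfold gkey'
  have h2 : (u.1 : ℕ) < x := u.1.2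
  calc (u.2:ℕ) * x + (u.1:ℕ) < (u.2:ℕ) * x + x := by omega
    _ = ((u.2:ℕ) + 1) * x := by ring
    _ ≤ (v.2:ℕ) * x := Nat.mul_le_mul_right x h
    _ ≤ (v.2:ℕ) * x + (v.1:ℕ) := Nat.le_add_right _ _

private lemma gkey'_lt_snd {x y : ℕ} {u v : Fin x × Fin y} (h1 : (u.2:ℕ) = (v.2:ℕ))
    (h2 : (u.1:ℕ) < (v.1:ℕ)) : gkey' u < gkey' v := by
  unfold gkey'; rw [h1]; omega

private lemma gkey_inj {x y : ℕ} {u v : Fin x × Fin y} (h : gkey u = gkey v) : u = v := by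
  rcases Nat.lt_trichotomy (u.1:ℕ) (v.1:ℕ) with h1 | h1 | h1
  · exact absurd h (Nat.ne_of_lt (gkey_lt_fst h1))
  · apply vtx_ext h1
    unfold gkey at h; rw [h1] at h; omega
  · exact absurd h.symm (Nat.ne_of_lt (gkey_lt_fst h1))

private lemma gkey_le_max {x y : ℕ} (hx : 0 < x) (hy : 0 < y) (v : Fin x × Fin y)
    (hmx : x - 1 < x) (hmy : y - 1 < y) : gkey v ≤ gkey (vtx (x-1) (y-1) hmx hmy) := by
  unfold gkey
  have h1 : (v.1 : ℕ) ≤ x - 1 := by have := v.1.2; omega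
  have h2 : (v.2 : ℕ) ≤ y - 1 := by have := v.2.2; omega
  have := Nat.mul_le_mul_right y h1
  simp only [vtx_fst, vtx_snd]
  omega

private lemma gkey'_le_max {x y : ℕ} (hx : 0 < x) (hy : 0 < y) (v : Fin x × Fin y)
    (hmx : x - 1 < x) (hmy : y - 1 < y) : gkey' v ≤ gkey' (vtx (x-1) (y-1) hmx hmy) := by
  unfold gkey'
  have h1 : (v.1 : ℕ) ≤ x - 1 := by have := v.1.2; omega
  have h2 : (v.2 : ℕ) ≤ y - 1 := by have := v.2.2; omega
  have := Nat.mul_le_mul_right x h2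
  simp only [vtx_fst, vtx_snd]
  omega

private lemma bnot_of_ne {a b : Bool} (h : a ≠ b) : a = !b := by revert h; revert a b; decide
private lemma bne_not_self : ∀ b : Bool, (!b) ≠ b := by decide

-- caseA / caseB1
private lemma caseA {x y : ℕ} (τ : Fin x × Fin y → Bool) (t : Bool) (p : Fin x × Fin y)
    (hpt : τ p = t)
    (hTb : ∀ w, (gridGraph x y).Adj p w → τ w = t →
      ((w.1:ℕ) + 1 = (p.1:ℕ) ∧ (w.2:ℕ) = (p.2:ℕ)) ∨
      ((w.1:ℕ) = (p.1:ℕ) ∧ (w.2:ℕ) + 1 = (p.2:ℕ)))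
    (n : Fin x × Fin y) (hna : (gridGraph x y).Adj p n) (hns : τ n ≠ t)
    (q r : Fin x × Fin y) (hqs : τ q ≠ t) (hrt : τ r = t) (hqr : (gridGraph x y).Adj q r)
    (hqnp : ¬ (gridGraph x y).Adj q p) :
    ∃ S : Set (Sym2 (Fin x × Fin y)), S ⊆ (gridGraph x y).edgeSet ∧ S.ncard ≤ 2 ∧
      ¬ IsSwapEq ((gridGraph x y).deleteEdges S) τ := by
  classical
  set G := gridGraph x y with hGdef
  set T : Set (Fin x × Fin y) := {w | G.Adj p w ∧ τ w = t} with hTdef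
  set S : Set (Sym2 (Fin x × Fin y)) := (fun w => s(p, w)) '' T with hSdef
  have hTfin : T.Finite := Set.toFinite _
  have hsub : S ⊆ G.edgeSet := by
    rintro e ⟨w, hw, rfl⟩
    exact G.mem_edgeSet.mpr hw.1
  have hT2 : T.ncard ≤ 2 := by
    have hinj : Set.InjOn (fun w : Fin x × Fin y => decide ((w.1:ℕ) = (p.1:ℕ))) T := by
      intro w hw w' hw' hf
      have h1 := hTb w hw.1 hw.2
      have h2 := hTb w' hw'.1 hw'.2
      have hf' : decide ((w.1:ℕ) = (p.1:ℕ)) = decide ((w'.1:ℕ) = (p.1:ℕ)) := hf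
      have hiff : ((w.1:ℕ) = (p.1:ℕ)) ↔ ((w'.1:ℕ) = (p.1:ℕ)) := decide_eq_decide.mp hf'
      rcases h1 with ⟨hL, hL2⟩ | ⟨hD, hD2⟩ <;> rcases h2 with ⟨hL', hL2'⟩ | ⟨hD', hD2'⟩
      · exact vtx_ext (by omega) (by omega)
      · exact absurd (hiff.mpr hD') (by omega)
      · exact absurd (hiff.mp hD) (by omega)
      · exact vtx_ext (by omega) (by omega)
    have := Set.ncard_le_ncard_of_injOn _ (fun a _ => Set.mem_univ _) hinj Set.finite_univ
    simpa [Set.ncard_univ] using this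
  have hScard : S.ncard ≤ 2 :=
    le_trans (Set.ncard_image_le (f := fun w => s(p, w)) hTfin) hT2
  have hSmem : ∀ w, G.Adj p w → (s(p, w) ∈ S ↔ τ w = t) := by
    intro w hadj
    constructor
    · rintro ⟨w', hw', heq⟩
      rcases Sym2.eq_iff.mp heq with ⟨_, h2⟩ | ⟨h1, _⟩
      · rw [← h2]; exact hw'.2
      · exfalso; rw [← h1] at hadj; exact G.loopless.irrefl p hadj
    · intro hwt; exact ⟨w, ⟨hadj, hwt⟩, rfl⟩
  have hnbrp : ∀ w, w ∈ ((G.deleteEdges S).neighborSet p) ↔ (G.Adj p w ∧ τ w ≠ t) := by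
    intro w
    rw [SimpleGraph.mem_neighborSet, SimpleGraph.deleteEdges_adj]
    constructor
    · rintro ⟨hadj, hnm⟩; exact ⟨hadj, fun ht => hnm ((hSmem w hadj).mpr ht)⟩
    · rintro ⟨hadj, hwt⟩; exact ⟨hadj, fun hs => hwt ((hSmem w hadj).mp hs)⟩
  refine ⟨S, hsub, hScard, fun he => he p q ?_⟩
  apply profitable_builder _ τ p q r
  · exact ⟨n, (hnbrp n).mpr ⟨hna, hns⟩⟩
  · intro w hw
    rw [hpt]; exact ((hnbrp w).mp hw).2
  · rw [hpt]; exact hqs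
  · intro hmem
    exact hqnp (G.adj_symm ((hnbrp q).mp hmem).1)
  · rw [SimpleGraph.mem_neighborSet, SimpleGraph.deleteEdges_adj]
    refine ⟨hqr, ?_⟩
    rintro ⟨w', hw', heq⟩
    rcases Sym2.eq_iff.mp heq with ⟨h1, _⟩ | ⟨_, h2⟩
    · rw [← h1, hpt] at hqs; exact hqs rfl
    · rw [h2] at hw'; exact hqs hw'.2
  · rw [hpt]; exact hrt

private lemma caseB1 {x y : ℕ} (τ : Fin x × Fin y → Bool) (t : Bool) (p : Fin x × Fin y)
    (hpt : τ p = t)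
    (hT1 : ∀ w w', (gridGraph x y).Adj p w → τ w = t → (gridGraph x y).Adj p w' → τ w' = t →
      w = w')
    (n₁ n₂ : Fin x × Fin y) (h1a : (gridGraph x y).Adj p n₁) (h1s : τ n₁ ≠ t)
    (h2a : (gridGraph x y).Adj p n₂) (h2s : τ n₂ ≠ t) (h12 : n₁ ≠ n₂)
    (q r : Fin x × Fin y) (hqs : τ q ≠ t) (hrt : τ r = t) (hqr : (gridGraph x y).Adj q r)
    (hrp : r ≠ p) (hqp : (gridGraph x y).Adj q p) :
    ∃ S : Set (Sym2 (Fin x × Fin y)), S ⊆ (gridGraph x y).edgeSet ∧ S.ncard ≤ 2 ∧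
      ¬ IsSwapEq ((gridGraph x y).deleteEdges S) τ := by
  classical
  set G := gridGraph x y with hGdef
  set T : Set (Fin x × Fin y) := {w | G.Adj p w ∧ τ w = t} with hTdef
  set S : Set (Sym2 (Fin x × Fin y)) := (fun w => s(p, w)) '' T ∪ {s(p, q)} with hSdef
  have hTfin : T.Finite := Set.toFinite _
  have hqp' : G.Adj p q := G.adj_symm hqp
  have hsub : S ⊆ G.edgeSet := by
    rintro e (⟨w, hw, rfl⟩ | he)
    · exact G.mem_edgeSet.mpr hw.1
    · rw [Set.mem_singleton_iff] at he
      rw [he]; exact G.mem_edgeSet.mpr hqp'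
  have hT1' : T.ncard ≤ 1 := by
    have hinj : Set.InjOn (fun _ : Fin x × Fin y => ()) T := by
      intro w hw w' hw' _
      exact hT1 w w' hw.1 hw.2 hw'.1 hw'.2
    have := Set.ncard_le_ncard_of_injOn _ (fun a _ => Set.mem_univ _) hinj Set.finite_univ
    simpa [Set.ncard_univ] using this
  have hScard : S.ncard ≤ 2 := by
    refine le_trans (Set.ncard_union_le _ _) ?_
    have := le_trans (Set.ncard_image_le (f := fun w => s(p, w)) hTfin) hT1'
    simp only [Set.ncard_singleton]
    omega
  have hqnep : q ≠ p := fun h => hqs (h ▸ hpt)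
  have hSmem : ∀ w, G.Adj p w → (s(p, w) ∈ S ↔ (τ w = t ∨ w = q)) := by
    intro w hadj
    constructor
    · rintro (⟨w', hw', heq⟩ | he)
      · rcases Sym2.eq_iff.mp heq with ⟨_, h2⟩ | ⟨h1, _⟩
        · left; rw [← h2]; exact hw'.2
        · exfalso; rw [← h1] at hadj; exact G.loopless.irrefl p hadj
      · rw [Set.mem_singleton_iff] at he
        rcases Sym2.eq_iff.mp he with ⟨_, h2⟩ | ⟨h1, _⟩
        · right; exact h2
        · exact absurd h1.symm hqnep
    · rintro (hwt | rfl)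
      · exact Or.inl ⟨w, ⟨hadj, hwt⟩, rfl⟩
      · exact Or.inr rfl
  have hnbrp : ∀ w, w ∈ ((G.deleteEdges S).neighborSet p) ↔
      (G.Adj p w ∧ τ w ≠ t ∧ w ≠ q) := by
    intro w
    rw [SimpleGraph.mem_neighborSet, SimpleGraph.deleteEdges_adj]
    constructor
    · rintro ⟨hadj, hnm⟩
      refine ⟨hadj, fun ht => hnm ((hSmem w hadj).mpr (Or.inl ht)),
        fun hh => hnm ((hSmem w hadj).mpr (Or.inr hh))⟩
    · rintro ⟨hadj, hwt, hwq⟩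
      refine ⟨hadj, fun hs => ?_⟩
      rcases (hSmem w hadj).mp hs with h | h
      · exact hwt h
      · exact hwq h
  -- pick n among n₁ n₂ different from q
  obtain ⟨n, hna, hns, hnq⟩ : ∃ n, G.Adj p n ∧ τ n ≠ t ∧ n ≠ q := by
    by_cases h : n₁ = q
    · exact ⟨n₂, h2a, h2s, fun hh => h12 (by rw [h, hh])⟩
    · exact ⟨n₁, h1a, h1s, h⟩
  refine ⟨S, hsub, hScard, fun he => he p q ?_⟩
  apply profitable_builder _ τ p q r
  · exact ⟨n, (hnbrp n).mpr ⟨hna, hns, hnq⟩⟩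
  · intro w hw
    rw [hpt]; exact ((hnbrp w).mp hw).2.1
  · rw [hpt]; exact hqs
  · intro hmem
    exact ((hnbrp q).mp hmem).2.2 rfl
  · rw [SimpleGraph.mem_neighborSet, SimpleGraph.deleteEdges_adj]
    refine ⟨hqr, ?_⟩
    rintro (⟨w', hw', heq⟩ | he)
    · rcases Sym2.eq_iff.mp heq with ⟨h1, _⟩ | ⟨_, h2⟩
      · rw [← h1, hpt] at hqs; exact hqs rfl
      · rw [h2] at hw'; exact hqs hw'.2
    · rw [Set.mem_singleton_iff] at he
      rcases Sym2.eq_iff.mp he with ⟨h1, _⟩ | ⟨_, h2⟩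
      · exact hqnep h1
      · exact hrp h2
  · rw [hpt]; exact hrt

private lemma vtx_eq_coords {x y : ℕ} {i j : ℕ} {h1 : i < x} {h2 : j < y} {v : Fin x × Fin y}
    (h : vtx i j h1 h2 = v) : (v.1:ℕ) = i ∧ (v.2:ℕ) = j := by rw [← h]; exact ⟨rfl, rfl⟩

private lemma route_x {x y : ℕ} (hx : 4 ≤ x) (hy : 4 ≤ y) (τ : Fin x × Fin y → Bool) (t : Bool)
    (ht5 : 5 ≤ {v : Fin x × Fin y | τ v = t}.ncard)
    (p : Fin x × Fin y) (hpt : τ p = t)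
    (hmax : ∀ w : Fin x × Fin y, τ w = t → gkey w ≤ gkey p)
    (hpa : (p.1 : ℕ) + 1 < x) :
    ∃ S : Set (Sym2 (Fin x × Fin y)), S ⊆ (gridGraph x y).edgeSet ∧ S.ncard ≤ 2 ∧
      ¬ IsSwapEq ((gridGraph x y).deleteEdges S) τ := by
  classical
  have ha : (p.1 : ℕ) < x := p.1.2
  have hb : (p.2 : ℕ) < y := p.2.2
  have P2 : ∀ v : Fin x × Fin y, gkey p < gkey v → τ v ≠ t :=
    fun v hv hvt => absurd (hmax v hvt) (by omega)
  -- the right neighbor of p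
  have hRs : τ (vtx ((p.1:ℕ)+1) (p.2:ℕ) hpa hb) ≠ t := by
    apply P2
    apply gkey_lt_fst
    simp
  have hRadj : (gridGraph x y).Adj p (vtx ((p.1:ℕ)+1) (p.2:ℕ) hpa hb) := by
    apply adj_val.mpr
    right
    refine ⟨by simp, Or.inl (by simp)⟩
  -- the only possible t-neighbors of p : L and D patterns
  have hTb : ∀ w, (gridGraph x y).Adj p w → τ w = t →
      ((w.1:ℕ) + 1 = (p.1:ℕ) ∧ (w.2:ℕ) = (p.2:ℕ)) ∨
      ((w.1:ℕ) = (p.1:ℕ) ∧ (w.2:ℕ) + 1 = (p.2:ℕ)) := by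
    intro w hadj hwt
    rcases adj_cases hadj with ⟨h1, h2⟩ | ⟨h1, h2⟩ | ⟨h1, h2⟩ | ⟨h1, h2⟩
    · exact absurd hwt (P2 w (gkey_lt_snd h1.symm (by omega)))
    · right; exact ⟨h1, h2⟩
    · exact absurd hwt (P2 w (gkey_lt_fst (by omega)))
    · left; exact ⟨h2, h1⟩
  by_cases hA : ∃ q r : Fin x × Fin y, τ q ≠ t ∧ τ r = t ∧ (gridGraph x y).Adj q r ∧
      ¬ (gridGraph x y).Adj q p
  · obtain ⟨q, r, hqs, hrt, hqr, hqnp⟩ := hA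
    exact caseA τ t p hpt hTb _ hRadj hRs q r hqs hrt hqr hqnp
  · simp only [not_exists, not_and, not_not] at hA
    -- hA : ∀ q r, τ q ≠ t → τ r = t → Adj q r → Adj q p
    have hTL : ∀ w, (gridGraph x y).Adj p w → τ w = t →
        ((w.1:ℕ) + 1 = (p.1:ℕ) ∧ (w.2:ℕ) = (p.2:ℕ)) := by
      intro w hadj hwt
      rcases hTb w hadj hwt with hL | hD
      · exact hL
      · exfalso
        have hb1 : 1 ≤ (p.2:ℕ) := by omega
        have hσs : τ (vtx ((p.1:ℕ)+1) ((p.2:ℕ)-1) hpa (by omega)) ≠ t := by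
          apply P2; apply gkey_lt_fst; simp
        have hσw : (gridGraph x y).Adj (vtx ((p.1:ℕ)+1) ((p.2:ℕ)-1) hpa (by omega)) w := by
          apply adj_val.mpr
          right
          refine ⟨by simp; omega, Or.inr (by simp; omega)⟩
        have := adj_val.mp (hA _ w hσs hwt hσw)
        simp only [vtx_fst, vtx_snd] at this
        omega
    by_cases hW : ∃ q r : Fin x × Fin y, τ q ≠ t ∧ τ r = t ∧ (gridGraph x y).Adj q r ∧ r ≠ p
    · obtain ⟨q, r, hqs, hrt, hqr, hrp⟩ := hW
      have hqadj : (gridGraph x y).Adj q p := hA q r hqs hrt hqr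
      have hT1 : ∀ w w', (gridGraph x y).Adj p w → τ w = t → (gridGraph x y).Adj p w' →
          τ w' = t → w = w' := by
        intro w w' h1 h2 h3 h4
        have e1 := hTL w h1 h2
        have e2 := hTL w' h3 h4
        exact vtx_ext (by omega) (by omega)
      by_cases hby : (p.2:ℕ) + 1 < y
      · refine caseB1 τ t p hpt hT1 _ (vtx (p.1:ℕ) ((p.2:ℕ)+1) ha hby) hRadj hRs ?_ ?_ ?_
          q r hqs hrt hqr hrp hqadj
        · apply adj_val.mpr; left; exact ⟨by simp, Or.inl (by simp)⟩
        · apply P2; apply gkey_lt_snd <;> simp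
        · intro h
          have := vtx_eq_coords h.symm
          simp only [vtx_fst, vtx_snd] at this
          omega
      · have hbm : 1 ≤ (p.2:ℕ) := by omega
        refine caseB1 τ t p hpt hT1 _ (vtx (p.1:ℕ) ((p.2:ℕ)-1) ha (by omega)) hRadj hRs ?_ ?_ ?_
          q r hqs hrt hqr hrp hqadj
        · apply adj_val.mpr; left; exact ⟨by simp, Or.inr (by simp; omega)⟩
        · intro hDt
          have := hTL _ (by apply adj_val.mpr; left; exact ⟨by simp, Or.inr (by simp; omega)⟩) hDt
          simp only [vtx_fst, vtx_snd] at this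
          omega
        · intro h
          have := vtx_eq_coords h.symm
          simp only [vtx_fst, vtx_snd] at this
          omega
    · exfalso
      simp only [not_exists, not_and, not_not, ne_eq] at hW
      -- hW : ∀ q r, ¬τ q = t → τ r = t → Adj q r → ¬¬(r = p) i.e. r = p
      have hNoW : ∀ q r : Fin x × Fin y, τ q ≠ t → τ r = t → (gridGraph x y).Adj q r → r = p :=
        fun q r h1 h2 h3 => hW q r h1 h2 h3
      have hex : ∃ w : Fin x × Fin y, τ w = t ∧ w ≠ p := by
        by_contra h
        push_neg at h
        have hsub : {v : Fin x × Fin y | τ v = t} ⊆ {p} := fun v hv => h v hv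
        have := Set.ncard_le_ncard hsub (Set.finite_singleton p)
        rw [Set.ncard_singleton] at this
        omega
      obtain ⟨w0, hw0mem, hw0max⟩ :=
        Set.exists_max_image {w : Fin x × Fin y | τ w = t ∧ w ≠ p} gkey (Set.toFinite _) hex
      obtain ⟨hw0t, hw0p⟩ := hw0mem
      have hw1 : (w0.1 : ℕ) < x := w0.1.2
      have hw2 : (w0.2 : ℕ) < y := w0.2.2
      have hstepR : ((w0.1:ℕ) + 1 < x) → (p.1:ℕ) = (w0.1:ℕ) + 1 ∧ (p.2:ℕ) = (w0.2:ℕ) := by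
        intro h
        have hadj : (gridGraph x y).Adj w0 (vtx ((w0.1:ℕ)+1) (w0.2:ℕ) h hw2) := by
          apply adj_val.mpr; right; exact ⟨by simp, Or.inl (by simp)⟩
        by_cases hnt : τ (vtx ((w0.1:ℕ)+1) (w0.2:ℕ) h hw2) = t
        · by_cases hnp : vtx ((w0.1:ℕ)+1) (w0.2:ℕ) h hw2 = p
          · exact vtx_eq_coords hnp
          · exfalso
            have hmem : (vtx ((w0.1:ℕ)+1) (w0.2:ℕ) h hw2) ∈
                {w : Fin x × Fin y | τ w = t ∧ w ≠ p} := ⟨hnt, hnp⟩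
            have hle := hw0max _ hmem
            have hgt : gkey w0 < gkey (vtx ((w0.1:ℕ)+1) (w0.2:ℕ) h hw2) :=
              gkey_lt_fst (by simp)
            omega
        · exact absurd ((hNoW _ w0 hnt hw0t ((gridGraph x y).adj_symm hadj))) hw0p
      have hstepU : ((w0.2:ℕ) + 1 < y) → (p.1:ℕ) = (w0.1:ℕ) ∧ (p.2:ℕ) = (w0.2:ℕ) + 1 := by
        intro h
        have hadj : (gridGraph x y).Adj w0 (vtx (w0.1:ℕ) ((w0.2:ℕ)+1) hw1 h) := by
          apply adj_val.mpr; left; exact ⟨by simp, Or.inl (by simp)⟩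
        by_cases hnt : τ (vtx (w0.1:ℕ) ((w0.2:ℕ)+1) hw1 h) = t
        · by_cases hnp : vtx (w0.1:ℕ) ((w0.2:ℕ)+1) hw1 h = p
          · exact vtx_eq_coords hnp
          · exfalso
            have hmem : (vtx (w0.1:ℕ) ((w0.2:ℕ)+1) hw1 h) ∈
                {w : Fin x × Fin y | τ w = t ∧ w ≠ p} := ⟨hnt, hnp⟩
            have hle := hw0max _ hmem
            have hgt : gkey w0 < gkey (vtx (w0.1:ℕ) ((w0.2:ℕ)+1) hw1 h) :=
              gkey_lt_snd (by simp) (by simp)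
            omega
        · exact absurd ((hNoW _ w0 hnt hw0t ((gridGraph x y).adj_symm hadj))) hw0p
      by_cases hR : (w0.1:ℕ) + 1 < x
      · by_cases hU : (w0.2:ℕ) + 1 < y
        · have e1 := hstepR hR
          have e2 := hstepU hU
          omega
        · -- main line : p = (a, y-1) with a = w0.1+1, w0 = L
          have e1 := hstepR hR
          have hbeq : (p.2:ℕ) = y - 1 := by omega
          have ha1 : 1 ≤ (p.1:ℕ) := by omega
          -- claim1 : top row is t for columns ≤ a-1
          have claim1 : ∀ k e, e ≤ (p.1:ℕ) - 1 → (p.1:ℕ) - 1 - e = k →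
              ∀ (h1 : e < x) (h2 : y - 1 < y), τ (vtx e (y-1) h1 h2) = t := by
            intro k
            induction k with
            | zero =>
              intro e he hk h1 h2
              have hee : e = (p.1:ℕ) - 1 := by omega
              have : vtx e (y-1) h1 h2 = w0 := vtx_ext (by simp; omega) (by simp; omega)
              rw [this]; exact hw0t
            | succ k ih =>
              intro e he hk h1 h2
              have hup := ih (e+1) (by omega) (by omega) (by omega) h2
              by_contra hne
              have hadj : (gridGraph x y).Adj (vtx e (y-1) h1 h2)
                  (vtx (e+1) (y-1) (by omega) h2) := by
                apply adj_val.mpr; right; exact ⟨by simp, Or.inl (by simp)⟩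
              have := vtx_eq_coords (hNoW _ _ hne hup hadj)
              omega
          have claim1' : ∀ e, e ≤ (p.1:ℕ) - 1 → ∀ (h1 : e < x) (h2 : y - 1 < y),
              τ (vtx e (y-1) h1 h2) = t := fun e he h1 h2 => claim1 _ e he rfl h1 h2
          -- claim2 : all rows, columns ≤ a-1 are t
          have claim2 : ∀ k j, j ≤ y - 1 → y - 1 - j = k → ∀ e, e ≤ (p.1:ℕ) - 1 →
              ∀ (h1 : e < x) (h2 : j < y), τ (vtx e j h1 h2) = t := by
            intro k
            induction k with
            | zero =>
              intro j hj hk e he h1 h2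
              have : vtx e j h1 h2 = vtx e (y-1) h1 (by omega) := vtx_ext (by simp) (by simp; omega)
              rw [this]; exact claim1' e he h1 (by omega)
            | succ k ih =>
              intro j hj hk e he h1 h2
              have hup := ih (j+1) (by omega) (by omega) e he h1 (by omega)
              by_contra hne
              have hadj : (gridGraph x y).Adj (vtx e j h1 h2)
                  (vtx e (j+1) h1 (by omega)) := by
                apply adj_val.mpr; left; exact ⟨by simp, Or.inl (by simp)⟩
              have := vtx_eq_coords (hNoW _ _ hne hup hadj)
              omega
          -- column a at row 0 is t
          have claim3 : τ (vtx (p.1:ℕ) 0 ha (by omega)) = t := by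
            by_contra hne
            have hleft : τ (vtx ((p.1:ℕ)-1) 0 (by omega) (by omega)) = t :=
              claim2 (y-1) 0 (by omega) (by omega) _ (by omega) _ _
            have hadj : (gridGraph x y).Adj (vtx (p.1:ℕ) 0 ha (by omega))
                (vtx ((p.1:ℕ)-1) 0 (by omega) (by omega)) := by
              apply adj_val.mpr; right; exact ⟨by simp, Or.inr (by simp; omega)⟩
            have := vtx_eq_coords (hNoW _ _ hne hleft hadj)
            omega
          -- final contradiction at (a+1, 0)
          have hvs : τ (vtx ((p.1:ℕ)+1) 0 hpa (by omega)) ≠ t := by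
            apply P2; apply gkey_lt_fst; simp
          have hadj : (gridGraph x y).Adj (vtx ((p.1:ℕ)+1) 0 hpa (by omega))
              (vtx (p.1:ℕ) 0 ha (by omega)) := by
            apply adj_val.mpr; right; exact ⟨by simp, Or.inr (by simp)⟩
          have := vtx_eq_coords (hNoW _ _ hvs claim3 hadj)
          simp only [vtx_fst, vtx_snd] at this
          omega
      · by_cases hU : (w0.2:ℕ) + 1 < y
        · have e2 := hstepU hU
          omega
        · -- w0 = (x-1, y-1) : maximal vertex, so p = w0, contradiction
          have h1 : gkey w0 ≤ gkey p := hmax w0 hw0t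
          have h2 : gkey p ≤ gkey w0 := by
            have hmx : x - 1 < x := by omega
            have hmy : y - 1 < y := by omega
            have := gkey_le_max (by omega) (by omega) p hmx hmy
            have heq : vtx (x-1) (y-1) hmx hmy = w0 := vtx_ext (by simp; omega) (by simp; omega)
            rwa [heq] at this
          exact hw0p (gkey_inj (le_antisymm h2 h1)).symm

private lemma route_y {x y : ℕ} (hx : 4 ≤ x) (hy : 4 ≤ y) (τ : Fin x × Fin y → Bool) (t : Bool)
    (ht5 : 5 ≤ {v : Fin x × Fin y | τ v = t}.ncard)
    (p : Fin x × Fin y) (hpt : τ p = t)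
    (hmax : ∀ w : Fin x × Fin y, τ w = t → gkey' w ≤ gkey' p)
    (hpb : (p.2 : ℕ) + 1 < y) :
    ∃ S : Set (Sym2 (Fin x × Fin y)), S ⊆ (gridGraph x y).edgeSet ∧ S.ncard ≤ 2 ∧
      ¬ IsSwapEq ((gridGraph x y).deleteEdges S) τ := by
  classical
  have ha : (p.1 : ℕ) < x := p.1.2
  have hb : (p.2 : ℕ) < y := p.2.2
  have P2 : ∀ v : Fin x × Fin y, gkey' p < gkey' v → τ v ≠ t :=
    fun v hv hvt => absurd (hmax v hvt) (by omega)
  -- the up neighbor of p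
  have hUs : τ (vtx (p.1:ℕ) ((p.2:ℕ)+1) ha hpb) ≠ t := by
    apply P2
    apply gkey'_lt_fst
    simp
  have hUadj : (gridGraph x y).Adj p (vtx (p.1:ℕ) ((p.2:ℕ)+1) ha hpb) := by
    apply adj_val.mpr
    left
    exact ⟨by simp, Or.inl (by simp)⟩
  -- the only possible t-neighbors of p : L and D patterns
  have hTb : ∀ w, (gridGraph x y).Adj p w → τ w = t →
      ((w.1:ℕ) + 1 = (p.1:ℕ) ∧ (w.2:ℕ) = (p.2:ℕ)) ∨
      ((w.1:ℕ) = (p.1:ℕ) ∧ (w.2:ℕ) + 1 = (p.2:ℕ)) := by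
    intro w hadj hwt
    rcases adj_cases hadj with ⟨h1, h2⟩ | ⟨h1, h2⟩ | ⟨h1, h2⟩ | ⟨h1, h2⟩
    · exact absurd hwt (P2 w (gkey'_lt_fst (by omega)))
    · right; exact ⟨h1, h2⟩
    · exact absurd hwt (P2 w (gkey'_lt_snd h1.symm (by omega)))
    · left; exact ⟨h2, h1⟩
  by_cases hA : ∃ q r : Fin x × Fin y, τ q ≠ t ∧ τ r = t ∧ (gridGraph x y).Adj q r ∧
      ¬ (gridGraph x y).Adj q p
  · obtain ⟨q, r, hqs, hrt, hqr, hqnp⟩ := hA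
    exact caseA τ t p hpt hTb _ hUadj hUs q r hqs hrt hqr hqnp
  · simp only [not_exists, not_and, not_not] at hA
    have hTD : ∀ w, (gridGraph x y).Adj p w → τ w = t →
        ((w.1:ℕ) = (p.1:ℕ) ∧ (w.2:ℕ) + 1 = (p.2:ℕ)) := by
      intro w hadj hwt
      rcases hTb w hadj hwt with hL | hD
      · exfalso
        have ha1 : 1 ≤ (p.1:ℕ) := by omega
        have hσs : τ (vtx ((p.1:ℕ)-1) ((p.2:ℕ)+1) (by omega) hpb) ≠ t := by
          apply P2; apply gkey'_lt_fst; simp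
        have hσw : (gridGraph x y).Adj (vtx ((p.1:ℕ)-1) ((p.2:ℕ)+1) (by omega) hpb) w := by
          apply adj_val.mpr
          left
          refine ⟨by simp; omega, Or.inr (by simp; omega)⟩
        have := adj_val.mp (hA _ w hσs hwt hσw)
        simp only [vtx_fst, vtx_snd] at this
        omega
      · exact hD
    by_cases hW : ∃ q r : Fin x × Fin y, τ q ≠ t ∧ τ r = t ∧ (gridGraph x y).Adj q r ∧ r ≠ p
    · obtain ⟨q, r, hqs, hrt, hqr, hrp⟩ := hW
      have hqadj : (gridGraph x y).Adj q p := hA q r hqs hrt hqr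
      have hT1 : ∀ w w', (gridGraph x y).Adj p w → τ w = t → (gridGraph x y).Adj p w' →
          τ w' = t → w = w' := by
        intro w w' h1 h2 h3 h4
        have e1 := hTD w h1 h2
        have e2 := hTD w' h3 h4
        exact vtx_ext (by omega) (by omega)
      by_cases hax : (p.1:ℕ) + 1 < x
      · refine caseB1 τ t p hpt hT1 _ (vtx ((p.1:ℕ)+1) (p.2:ℕ) hax hb) hUadj hUs ?_ ?_ ?_
          q r hqs hrt hqr hrp hqadj
        · apply adj_val.mpr; right; exact ⟨by simp, Or.inl (by simp)⟩
        · apply P2; apply gkey'_lt_snd <;> simp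
        · intro h
          have := vtx_eq_coords h.symm
          simp only [vtx_fst, vtx_snd] at this
          omega
      · have ham : 1 ≤ (p.1:ℕ) := by omega
        refine caseB1 τ t p hpt hT1 _ (vtx ((p.1:ℕ)-1) (p.2:ℕ) (by omega) hb) hUadj hUs ?_ ?_ ?_
          q r hqs hrt hqr hrp hqadj
        · apply adj_val.mpr; right; exact ⟨by simp, Or.inr (by simp; omega)⟩
        · intro hLt
          have := hTD _ (by apply adj_val.mpr; right; exact ⟨by simp, Or.inr (by simp; omega)⟩) hLt
          simp only [vtx_fst, vtx_snd] at this
          omega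
        · intro h
          have := vtx_eq_coords h.symm
          simp only [vtx_fst, vtx_snd] at this
          omega
    · exfalso
      simp only [not_exists, not_and, not_not, ne_eq] at hW
      have hNoW : ∀ q r : Fin x × Fin y, τ q ≠ t → τ r = t → (gridGraph x y).Adj q r → r = p :=
        fun q r h1 h2 h3 => hW q r h1 h2 h3
      have hex : ∃ w : Fin x × Fin y, τ w = t ∧ w ≠ p := by
        by_contra h
        push_neg at h
        have hsub : {v : Fin x × Fin y | τ v = t} ⊆ {p} := fun v hv => h v hv
        have := Set.ncard_le_ncard hsub (Set.finite_singleton p)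
        rw [Set.ncard_singleton] at this
        omega
      obtain ⟨w0, hw0mem, hw0max⟩ :=
        Set.exists_max_image {w : Fin x × Fin y | τ w = t ∧ w ≠ p} gkey' (Set.toFinite _) hex
      obtain ⟨hw0t, hw0p⟩ := hw0mem
      have hw1 : (w0.1 : ℕ) < x := w0.1.2
      have hw2 : (w0.2 : ℕ) < y := w0.2.2
      have hstepR : ((w0.1:ℕ) + 1 < x) → (p.1:ℕ) = (w0.1:ℕ) + 1 ∧ (p.2:ℕ) = (w0.2:ℕ) := by
        intro h
        have hadj : (gridGraph x y).Adj w0 (vtx ((w0.1:ℕ)+1) (w0.2:ℕ) h hw2) := by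
          apply adj_val.mpr; right; exact ⟨by simp, Or.inl (by simp)⟩
        by_cases hnt : τ (vtx ((w0.1:ℕ)+1) (w0.2:ℕ) h hw2) = t
        · by_cases hnp : vtx ((w0.1:ℕ)+1) (w0.2:ℕ) h hw2 = p
          · exact vtx_eq_coords hnp
          · exfalso
            have hmem : (vtx ((w0.1:ℕ)+1) (w0.2:ℕ) h hw2) ∈
                {w : Fin x × Fin y | τ w = t ∧ w ≠ p} := ⟨hnt, hnp⟩
            have hle := hw0max _ hmem
            have hgt : gkey' w0 < gkey' (vtx ((w0.1:ℕ)+1) (w0.2:ℕ) h hw2) :=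
              gkey'_lt_snd (by simp) (by simp)
            omega
        · exact absurd ((hNoW _ w0 hnt hw0t ((gridGraph x y).adj_symm hadj))) hw0p
      have hstepU : ((w0.2:ℕ) + 1 < y) → (p.1:ℕ) = (w0.1:ℕ) ∧ (p.2:ℕ) = (w0.2:ℕ) + 1 := by
        intro h
        have hadj : (gridGraph x y).Adj w0 (vtx (w0.1:ℕ) ((w0.2:ℕ)+1) hw1 h) := by
          apply adj_val.mpr; left; exact ⟨by simp, Or.inl (by simp)⟩
        by_cases hnt : τ (vtx (w0.1:ℕ) ((w0.2:ℕ)+1) hw1 h) = t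
        · by_cases hnp : vtx (w0.1:ℕ) ((w0.2:ℕ)+1) hw1 h = p
          · exact vtx_eq_coords hnp
          · exfalso
            have hmem : (vtx (w0.1:ℕ) ((w0.2:ℕ)+1) hw1 h) ∈
                {w : Fin x × Fin y | τ w = t ∧ w ≠ p} := ⟨hnt, hnp⟩
            have hle := hw0max _ hmem
            have hgt : gkey' w0 < gkey' (vtx (w0.1:ℕ) ((w0.2:ℕ)+1) hw1 h) :=
              gkey'_lt_fst (by simp)
            omega
        · exact absurd ((hNoW _ w0 hnt hw0t ((gridGraph x y).adj_symm hadj))) hw0p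
      by_cases hU : (w0.2:ℕ) + 1 < y
      · by_cases hR : (w0.1:ℕ) + 1 < x
        · have e1 := hstepR hR
          have e2 := hstepU hU
          omega
        · -- main line : p = (x-1, b) with b = w0.2+1, w0 = D
          have e2 := hstepU hU
          have haeq : (p.1:ℕ) = x - 1 := by omega
          have hb1 : 1 ≤ (p.2:ℕ) := by omega
          -- claim1 : right column is t for rows ≤ b-1
          have claim1 : ∀ k j, j ≤ (p.2:ℕ) - 1 → (p.2:ℕ) - 1 - j = k →
              ∀ (h1 : x - 1 < x) (h2 : j < y), τ (vtx (x-1) j h1 h2) = t := by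
            intro k
            induction k with
            | zero =>
              intro j hj hk h1 h2
              have : vtx (x-1) j h1 h2 = w0 := vtx_ext (by simp; omega) (by simp; omega)
              rw [this]; exact hw0t
            | succ k ih =>
              intro j hj hk h1 h2
              have hup := ih (j+1) (by omega) (by omega) h1 (by omega)
              by_contra hne
              have hadj : (gridGraph x y).Adj (vtx (x-1) j h1 h2)
                  (vtx (x-1) (j+1) h1 (by omega)) := by
                apply adj_val.mpr; left; exact ⟨by simp, Or.inl (by simp)⟩
              have := vtx_eq_coords (hNoW _ _ hne hup hadj)
              omega
          have claim1' : ∀ j, j ≤ (p.2:ℕ) - 1 → ∀ (h1 : x - 1 < x) (h2 : j < y),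
              τ (vtx (x-1) j h1 h2) = t := fun j hj h1 h2 => claim1 _ j hj rfl h1 h2
          -- claim2 : all columns, rows ≤ b-1 are t
          have claim2 : ∀ k e, e ≤ x - 1 → x - 1 - e = k → ∀ j, j ≤ (p.2:ℕ) - 1 →
              ∀ (h1 : e < x) (h2 : j < y), τ (vtx e j h1 h2) = t := by
            intro k
            induction k with
            | zero =>
              intro e he hk j hj h1 h2
              have : vtx e j h1 h2 = vtx (x-1) j (by omega) h2 := vtx_ext (by simp; omega) (by simp)
              rw [this]; exact claim1' j hj (by omega) h2
            | succ k ih =>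
              intro e he hk j hj h1 h2
              have hright := ih (e+1) (by omega) (by omega) j hj (by omega) h2
              by_contra hne
              have hadj : (gridGraph x y).Adj (vtx e j h1 h2)
                  (vtx (e+1) j (by omega) h2) := by
                apply adj_val.mpr; right; exact ⟨by simp, Or.inl (by simp)⟩
              have := vtx_eq_coords (hNoW _ _ hne hright hadj)
              omega
          -- row b at column 0 is t
          have claim3 : τ (vtx 0 (p.2:ℕ) (by omega) hb) = t := by
            by_contra hne
            have hdown : τ (vtx 0 ((p.2:ℕ)-1) (by omega) (by omega)) = t :=
              claim2 (x-1) 0 (by omega) (by omega) _ (by omega) _ _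
            have hadj : (gridGraph x y).Adj (vtx 0 (p.2:ℕ) (by omega) hb)
                (vtx 0 ((p.2:ℕ)-1) (by omega) (by omega)) := by
              apply adj_val.mpr; left; exact ⟨by simp, Or.inr (by simp; omega)⟩
            have := vtx_eq_coords (hNoW _ _ hne hdown hadj)
            omega
          -- final contradiction at (0, b+1)
          have hvs : τ (vtx 0 ((p.2:ℕ)+1) (by omega) hpb) ≠ t := by
            apply P2; apply gkey'_lt_fst; simp
          have hadj : (gridGraph x y).Adj (vtx 0 ((p.2:ℕ)+1) (by omega) hpb)
              (vtx 0 (p.2:ℕ) (by omega) hb) := by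
            apply adj_val.mpr; left; exact ⟨by simp, Or.inr (by simp)⟩
          have := vtx_eq_coords (hNoW _ _ hvs claim3 hadj)
          simp only [vtx_fst, vtx_snd] at this
          omega
      · by_cases hR : (w0.1:ℕ) + 1 < x
        · have e1 := hstepR hR
          omega
        · have h1 : gkey' w0 ≤ gkey' p := hmax w0 hw0t
          have h2 : gkey' p ≤ gkey' w0 := by
            have hmx : x - 1 < x := by omega
            have hmy : y - 1 < y := by omega
            have := gkey'_le_max (by omega) (by omega) p hmx hmy
            have heq : vtx (x-1) (y-1) hmx hmy = w0 := vtx_ext (by simp; omega) (by simp; omega)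
            rwa [heq] at this
          have heqk : gkey' w0 = gkey' p := le_antisymm h1 h2
          -- gkey' injective
          have : w0 = p := by
            rcases Nat.lt_trichotomy (w0.2:ℕ) (p.2:ℕ) with hlt | heq2 | hlt
            · exact absurd heqk (Nat.ne_of_lt (gkey'_lt_fst hlt))
            · apply vtx_ext _ heq2
              unfold gkey' at heqk
              rw [heq2] at heqk
              omega
            · exact absurd heqk.symm (Nat.ne_of_lt (gkey'_lt_fst hlt))
          exact hw0p this

private lemma ultra {x y : ℕ} (hx : 4 ≤ x) (hy : 4 ≤ y) (τ : Fin x × Fin y → Bool) (t : Bool)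
    (hs5 : 5 ≤ {v : Fin x × Fin y | τ v ≠ t}.ncard)
    (p p' : Fin x × Fin y) (hpt : τ p = t) (hp't : τ p' = t)
    (hmax : ∀ w : Fin x × Fin y, τ w = t → gkey w ≤ gkey p)
    (hmax' : ∀ w : Fin x × Fin y, τ w = t → gkey' w ≤ gkey' p')
    (hpa : (p.1:ℕ) = x - 1) (hp'b : (p'.2:ℕ) = y - 1)
    (hm : τ (vtx (x-1) (y-1) (by omega) (by omega)) ≠ t)
    (hNoFar : ∀ q r : Fin x × Fin y, τ q ≠ t → τ r = t → (gridGraph x y).Adj q r →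
      (gridGraph x y).Adj q p) : False := by
  classical
  have ha : (p.1 : ℕ) < x := p.1.2
  have hb : (p.2 : ℕ) < y := p.2.2
  have ha' : (p'.1 : ℕ) < x := p'.1.2
  have hb' : (p'.2 : ℕ) < y := p'.2.2
  -- p ≠ m and p' ≠ m
  have hpne : (p.2:ℕ) ≠ y - 1 := by
    intro h
    apply hm
    have : vtx (x-1) (y-1) (by omega) (by omega) = p := vtx_ext (by simp; omega) (by simp; omega)
    rw [this]; exact hpt
  have hp'ne : (p'.1:ℕ) ≠ x - 1 := by
    intro h
    apply hm
    have : vtx (x-1) (y-1) (by omega) (by omega) = p' := vtx_ext (by simp; omega) (by simp; omega)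
    rw [this]; exact hp't
  have hb2 : (p.2:ℕ) ≤ y - 2 := by omega
  have ha'2 : (p'.1:ℕ) ≤ x - 2 := by omega
  -- the σ2 step : forces p' = (x-2, y-1) and p = (x-1, y-2)
  have hs1 : (p'.1:ℕ) + 1 < x := by omega
  have hy1 : y - 1 < y := by omega
  have hσs : τ (vtx ((p'.1:ℕ)+1) (y-1) hs1 hy1) ≠ t := by
    intro h
    have hlt : gkey' p' < gkey' (vtx ((p'.1:ℕ)+1) (y-1) hs1 hy1) := by
      apply gkey'_lt_snd
      · simp only [vtx_snd]; omega
      · simp only [vtx_fst]; omega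
    exact absurd (hmax' _ h) (by omega)
  have hσadj : (gridGraph x y).Adj (vtx ((p'.1:ℕ)+1) (y-1) hs1 hy1) p' := by
    apply adj_val.mpr; right
    refine ⟨by simp only [vtx_snd]; omega, Or.inr (by simp only [vtx_fst])⟩
  have hforce : (p'.1:ℕ) = x - 2 ∧ (p.2:ℕ) = y - 2 := by
    have := adj_val.mp (hNoFar _ p' hσs hp't hσadj)
    simp only [vtx_fst, vtx_snd] at this
    omega
  obtain ⟨ha'eq, hbeq⟩ := hforce
  -- claim1 : top row is t for columns ≤ x-2
  have claim1 : ∀ k e, e ≤ x - 2 → x - 2 - e = k → ∀ (h1 : e < x) (h2 : y - 1 < y),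
      τ (vtx e (y-1) h1 h2) = t := by
    intro k
    induction k with
    | zero =>
      intro e he hk h1 h2
      have : vtx e (y-1) h1 h2 = p' := vtx_ext (by simp; omega) (by simp; omega)
      rw [this]; exact hp't
    | succ k ih =>
      intro e he hk h1 h2
      have hup := ih (e+1) (by omega) (by omega) (by omega) h2
      by_contra hne
      have hadj : (gridGraph x y).Adj (vtx e (y-1) h1 h2)
          (vtx (e+1) (y-1) (by omega) h2) := by
        apply adj_val.mpr; right; exact ⟨by simp, Or.inl (by simp)⟩
      have := adj_val.mp (hNoFar _ _ hne hup hadj)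
      simp only [vtx_fst, vtx_snd] at this
      omega
  have claim1' : ∀ e, e ≤ x - 2 → ∀ (h1 : e < x) (h2 : y - 1 < y),
      τ (vtx e (y-1) h1 h2) = t := fun e he h1 h2 => claim1 _ e he rfl h1 h2
  -- claim2 : all rows are t for columns ≤ x-3
  have claim2 : ∀ k j, j ≤ y - 1 → y - 1 - j = k → ∀ e, e ≤ x - 3 →
      ∀ (h1 : e < x) (h2 : j < y), τ (vtx e j h1 h2) = t := by
    intro k
    induction k with
    | zero =>
      intro j hj hk e he h1 h2
      have : vtx e j h1 h2 = vtx e (y-1) h1 (by omega) := vtx_ext (by simp) (by simp; omega)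
      rw [this]; exact claim1' e (by omega) h1 (by omega)
    | succ k ih =>
      intro j hj hk e he h1 h2
      have hup := ih (j+1) (by omega) (by omega) e he h1 (by omega)
      by_contra hne
      have hadj : (gridGraph x y).Adj (vtx e j h1 h2) (vtx e (j+1) h1 (by omega)) := by
        apply adj_val.mpr; left; exact ⟨by simp, Or.inl (by simp)⟩
      have := adj_val.mp (hNoFar _ _ hne hup hadj)
      simp only [vtx_fst, vtx_snd] at this
      omega
  -- the column x-2 : any non-t vertex there is at row y-2
  have claimX2 : ∀ v2 (h2 : v2 < y) (h1 : x - 2 < x),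
      τ (vtx (x-2) v2 h1 h2) ≠ t → v2 = y - 2 := by
    intro v2 h2 h1 hs
    by_cases hv2 : v2 = y - 1
    · exfalso
      apply hs
      have : vtx (x-2) v2 h1 h2 = vtx (x-2) (y-1) h1 (by omega) := vtx_ext (by simp) (by simp; omega)
      rw [this]; exact claim1' (x-2) (by omega) h1 (by omega)
    · have hleft : τ (vtx (x-3) v2 (by omega) h2) = t :=
        claim2 (y-1-v2) v2 (by omega) rfl (x-3) (by omega) (by omega) h2
      have hadj : (gridGraph x y).Adj (vtx (x-2) v2 h1 h2) (vtx (x-3) v2 (by omega) h2) := by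
        apply adj_val.mpr; right; exact ⟨by simp, Or.inr (by simp; omega)⟩
      have := adj_val.mp (hNoFar _ _ hs hleft hadj)
      simp only [vtx_fst, vtx_snd] at this
      omega
  -- classification of non-t vertices
  have hsub : {v : Fin x × Fin y | τ v ≠ t} ⊆
      {vtx (x-1) (y-1) (by omega) (by omega), vtx (x-2) (y-2) (by omega) (by omega),
       vtx (x-1) (y-3) (by omega) (by omega)} := by
    intro v hv
    simp only [Set.mem_setOf_eq] at hv
    have hv1 : (v.1:ℕ) < x := v.1.2
    have hv2 : (v.2:ℕ) < y := v.2.2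
    have hveq : vtx (v.1:ℕ) (v.2:ℕ) hv1 hv2 = v := vtx_ext rfl rfl
    simp only [Set.mem_insert_iff, Set.mem_singleton_iff]
    by_cases hc1 : (v.1:ℕ) ≤ x - 3
    · exfalso
      apply hv
      rw [← hveq]
      exact claim2 (y-1-(v.2:ℕ)) (v.2:ℕ) (by omega) rfl _ hc1 hv1 hv2
    · by_cases hc2 : (v.1:ℕ) = x - 2
      · right; left
        have : (v.2:ℕ) = y - 2 := by
          apply claimX2 (v.2:ℕ) hv2 (by omega)
          have : vtx (x-2) (v.2:ℕ) (by omega) hv2 = v := vtx_ext (by simp; omega) rfl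
          rw [this]; exact hv
        exact (vtx_ext (by simp; omega) (by simp; omega)).symm
      · -- v.1 = x-1
        have hc3 : (v.1:ℕ) = x - 1 := by omega
        by_cases hd1 : (v.2:ℕ) = y - 1
        · left; exact (vtx_ext (by simp; omega) (by simp; omega)).symm
        · by_cases hd2 : (v.2:ℕ) = y - 2
          · exfalso
            apply hv
            have : v = p := vtx_ext (by omega) (by omega)
            rw [this]; exact hpt
          · -- v.2 ≤ y-3
            have hd3 : (v.2:ℕ) ≤ y - 3 := by omega
            right; right
            have hL2 : τ (vtx (x-2) (v.2:ℕ) (by omega) hv2) = t := by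
              by_contra hc
              have := claimX2 (v.2:ℕ) hv2 (by omega) hc
              omega
            have hadj : (gridGraph x y).Adj v (vtx (x-2) (v.2:ℕ) (by omega) hv2) := by
              apply adj_val.mpr; right; exact ⟨by simp, Or.inr (by simp; omega)⟩
            have := adj_val.mp (hNoFar _ _ hv hL2 hadj)
            exact (vtx_ext (by simp; omega) (by simp; omega)).symm
  -- counting contradiction
  have h3 : ({vtx (x-1) (y-1) (by omega : x-1<x) (by omega : y-1<y),
      vtx (x-2) (y-2) (by omega) (by omega),
      vtx (x-1) (y-3) (by omega) (by omega)} : Set (Fin x × Fin y)).ncard ≤ 3 := by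
    refine le_trans (Set.ncard_insert_le _ _) ?_
    have h2 := Set.ncard_insert_le (vtx (x-2) (y-2) (by omega : x-2<x) (by omega : y-2<y))
      ({vtx (x-1) (y-3) (by omega : x-1<x) (by omega : y-3<y)} : Set (Fin x × Fin y))
    simp only [Set.ncard_singleton] at h2
    omega
  have := Set.ncard_le_ncard hsub (Set.toFinite _)
  omega

private lemma main_core {x y : ℕ} (hx : 4 ≤ x) (hy : 4 ≤ y) (τ : Fin x × Fin y → Bool) (t : Bool)
    (ht5 : 5 ≤ {v : Fin x × Fin y | τ v = t}.ncard)
    (hs5 : 5 ≤ {v : Fin x × Fin y | τ v ≠ t}.ncard)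
    (hmt : τ (vtx (x-1) (y-1) (by omega) (by omega)) ≠ t) :
    ∃ S : Set (Sym2 (Fin x × Fin y)), S ⊆ (gridGraph x y).edgeSet ∧ S.ncard ≤ 2 ∧
      ¬ IsSwapEq ((gridGraph x y).deleteEdges S) τ := by
  classical
  have htne : {v : Fin x × Fin y | τ v = t}.Nonempty := by
    rcases Set.eq_empty_or_nonempty {v : Fin x × Fin y | τ v = t} with he | hne
    · rw [he] at ht5; simp at ht5
    · exact hne
  obtain ⟨p, hpt, hpmax⟩ :=
    Set.exists_max_image {v : Fin x × Fin y | τ v = t} gkey (Set.toFinite _) htne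
  have hmaxp : ∀ w : Fin x × Fin y, τ w = t → gkey w ≤ gkey p := fun w hw => hpmax w hw
  by_cases hpa : (p.1:ℕ) + 1 < x
  · exact route_x hx hy τ t ht5 p hpt hmaxp hpa
  · obtain ⟨p', hp't, hp'max⟩ :=
      Set.exists_max_image {v : Fin x × Fin y | τ v = t} gkey' (Set.toFinite _) htne
    have hmaxp' : ∀ w : Fin x × Fin y, τ w = t → gkey' w ≤ gkey' p' := fun w hw => hp'max w hw
    by_cases hp'b : (p'.2:ℕ) + 1 < y
    · exact route_y hx hy τ t ht5 p' hp't hmaxp' hp'b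
    · have hax : (p.1:ℕ) = x - 1 := by have := p.1.2; omega
      have hby : (p'.2:ℕ) = y - 1 := by have := p'.2.2; omega
      by_cases hA : ∃ q r : Fin x × Fin y, τ q ≠ t ∧ τ r = t ∧ (gridGraph x y).Adj q r ∧
          ¬ (gridGraph x y).Adj q p
      · -- caseA with the up-neighbor of p
        have P2 : ∀ v : Fin x × Fin y, gkey p < gkey v → τ v ≠ t :=
          fun v hv hvt => absurd (hmaxp v hvt) (by omega)
        have hbne : (p.2:ℕ) ≠ y - 1 := by
          intro h
          apply hmt
          have : vtx (x-1) (y-1) (by omega) (by omega) = p :=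
            vtx_ext (by simp; omega) (by simp; omega)
          rw [this]; exact hpt
        have hpby : (p.2:ℕ) + 1 < y := by have := p.2.2; omega
        have hTb : ∀ w, (gridGraph x y).Adj p w → τ w = t →
            ((w.1:ℕ) + 1 = (p.1:ℕ) ∧ (w.2:ℕ) = (p.2:ℕ)) ∨
            ((w.1:ℕ) = (p.1:ℕ) ∧ (w.2:ℕ) + 1 = (p.2:ℕ)) := by
          intro w hadj hwt
          rcases adj_cases hadj with ⟨h1, h2⟩ | ⟨h1, h2⟩ | ⟨h1, h2⟩ | ⟨h1, h2⟩
          · exact absurd hwt (P2 w (gkey_lt_snd h1.symm (by omega)))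
          · right; exact ⟨h1, h2⟩
          · exact absurd hwt (P2 w (gkey_lt_fst (by omega)))
          · left; exact ⟨h2, h1⟩
        have hUs : τ (vtx (p.1:ℕ) ((p.2:ℕ)+1) p.1.2 hpby) ≠ t := by
          apply P2
          apply gkey_lt_snd
          · simp
          · simp
        have hUadj : (gridGraph x y).Adj p (vtx (p.1:ℕ) ((p.2:ℕ)+1) p.1.2 hpby) := by
          apply adj_val.mpr; left; exact ⟨by simp, Or.inl (by simp)⟩
        obtain ⟨q, r, hqs, hrt, hqr, hqnp⟩ := hA
        exact caseA τ t p hpt hTb _ hUadj hUs q r hqs hrt hqr hqnp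
      · simp only [not_exists, not_and, not_not] at hA
        exact absurd (ultra hx hy τ t hs5 p p' hpt hp't hmaxp hmaxp' hax hby hmt hA) id



end AuxiliaryLemmas

/-- On an `(x × y)`-grid with `x, y ≥ 4` and at least five agents of each type, no
swap-equilibrium is 2-edge-robust: some set of at most two edges makes it unstable. -/
theorem grid_not_two_edge_robust (x y : ℕ) (hx : 4 ≤ x) (hy : 4 ≤ y)
    (τ : Fin x × Fin y → Bool)
    (h1 : 5 ≤ {v : Fin x × Fin y | τ v = true}.ncard)
    (h2 : 5 ≤ {v : Fin x × Fin y | τ v = false}.ncard)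
    (heq : IsSwapEq (gridGraph x y) τ) :
    ∃ S : Set (Sym2 (Fin x × Fin y)), S ⊆ (gridGraph x y).edgeSet ∧ S.ncard ≤ 2 ∧
      ¬ IsSwapEq ((gridGraph x y).deleteEdges S) τ := by
  classical
  cases hc : τ (vtx (x-1) (y-1) (by omega) (by omega)) with
  | false =>
    apply main_core hx hy τ true h1 ?_ ?_
    · have hseteq : {v : Fin x × Fin y | τ v ≠ true} = {v : Fin x × Fin y | τ v = false} := by
        ext v; simp only [Set.mem_setOf_eq]; cases τ v <;> simp
      rw [hseteq]; exact h2
    · rw [hc]; simp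
  | true =>
    apply main_core hx hy τ false h2 ?_ ?_
    · have hseteq : {v : Fin x × Fin y | τ v ≠ false} = {v : Fin x × Fin y | τ v = true} := by
        ext v; simp only [Set.mem_setOf_eq]; cases τ v <;> simp
      rw [hseteq]; exact h1
    · rw [hc]; simp
end

section
/- In a Schelling game with |T1| = |T2| on an (x × y)-grid with even x ≥ 4 and y ≥ 2, the assignment in which agents of T1 occupy the first x/2 columns and agents of T2 occupy the remaining columns is a swap-equilibrium, and it remains a swap-equilibrium after deleting any single edge (it is 1-edge-robust). -/
open SimpleGraph

variable {V : Type*}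

/-! ### Auxiliary lemmas -/


lemma swapAt_comm (τ : V → Bool) (i j : V) : swapAt τ i j = swapAt τ j i := by
  funext v
  by_cases h1 : v = i <;> by_cases h2 : v = j
  · subst h1; subst h2; simp [swapAt]
  · subst h1; simp [swapAt, h2, Ne.symm h2]
  · subst h2; simp [swapAt, h1, Ne.symm h1]
  · simp [swapAt, h1, h2]

lemma ncard_ge_two {α : Type*} {S : Set α} (hS : S.Finite) {a b : α}
    (ha : a ∈ S) (hb : b ∈ S) (hab : a ≠ b) : 2 ≤ S.ncard := by
  have h : ({a, b} : Set α) ⊆ S := by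
    intro z hz; rcases hz with rfl | rfl
    · exact ha
    · exact hb
  calc 2 = ({a, b} : Set α).ncard := (Set.ncard_pair hab).symm
    _ ≤ S.ncard := Set.ncard_le_ncard h hS

lemma ncard_ge_three {α : Type*} {S : Set α} (hS : S.Finite) {a b c : α}
    (ha : a ∈ S) (hb : b ∈ S) (hc : c ∈ S)
    (hab : a ≠ b) (hac : a ≠ c) (hbc : b ≠ c) : 3 ≤ S.ncard := by
  have h : ({a, b, c} : Set α) ⊆ S := by
    intro z hz; rcases hz with rfl | rfl | rfl
    · exact ha
    · exact hb
    · exact hc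
  have h3 : ({a, b, c} : Set α).ncard = 3 := by
    rw [Set.ncard_insert_of_notMem (by simp [hab, hac]) (Set.toFinite _),
      Set.ncard_pair hbc]
  calc 3 = ({a, b, c} : Set α).ncard := h3.symm
    _ ≤ S.ncard := Set.ncard_le_ncard h hS

lemma grid_deg_two {x y : ℕ} (hx : 2 ≤ x) (hy : 2 ≤ y) (v : Fin x × Fin y) :
    2 ≤ ((gridGraph x y).neighborSet v).ncard := by
  have hvx := v.1.isLt
  have hvy := v.2.isLt
  obtain ⟨a, ha⟩ : ∃ a : Fin x, ((v.1 : ℕ) + 1 = a ∨ (a : ℕ) + 1 = v.1) := by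
    by_cases h : (v.1 : ℕ) + 1 < x
    · exact ⟨⟨(v.1 : ℕ) + 1, h⟩, Or.inl rfl⟩
    · exact ⟨⟨(v.1 : ℕ) - 1, by omega⟩, Or.inr (by show (v.1:ℕ) - 1 + 1 = v.1; omega)⟩
  obtain ⟨b, hb⟩ : ∃ b : Fin y, ((v.2 : ℕ) + 1 = b ∨ (b : ℕ) + 1 = v.2) := by
    by_cases h : (v.2 : ℕ) + 1 < y
    · exact ⟨⟨(v.2 : ℕ) + 1, h⟩, Or.inl rfl⟩
    · exact ⟨⟨(v.2 : ℕ) - 1, by omega⟩, Or.inr (by show (v.2:ℕ) - 1 + 1 = v.2; omega)⟩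
  have h1 : (a, v.2) ∈ (gridGraph x y).neighborSet v := Or.inr ⟨rfl, ha⟩
  have h2 : (v.1, b) ∈ (gridGraph x y).neighborSet v := Or.inl ⟨rfl, hb⟩
  refine ncard_ge_two (Set.toFinite _) h1 h2 ?_
  intro h
  have hcoe : (a : ℕ) = (v.1 : ℕ) := congrArg (fun p : Fin x × Fin y => ((p.1 : ℕ))) h
  omega

lemma grid_deg_three {x y : ℕ} (hy : 2 ≤ y) (v : Fin x × Fin y)
    (h1 : 1 ≤ (v.1 : ℕ)) (h2 : (v.1 : ℕ) + 1 < x) :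
    3 ≤ ((gridGraph x y).neighborSet v).ncard := by
  have hvy := v.2.isLt
  obtain ⟨b, hb⟩ : ∃ b : Fin y, ((v.2 : ℕ) + 1 = b ∨ (b : ℕ) + 1 = v.2) := by
    by_cases h : (v.2 : ℕ) + 1 < y
    · exact ⟨⟨(v.2 : ℕ) + 1, h⟩, Or.inl rfl⟩
    · exact ⟨⟨(v.2 : ℕ) - 1, by omega⟩, Or.inr (by show (v.2:ℕ) - 1 + 1 = v.2; omega)⟩
  set aR : Fin x := ⟨(v.1 : ℕ) + 1, h2⟩ with haR
  set aL : Fin x := ⟨(v.1 : ℕ) - 1, by omega⟩ with haL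
  have m1 : (aR, v.2) ∈ (gridGraph x y).neighborSet v := Or.inr ⟨rfl, Or.inl rfl⟩
  have m2 : (aL, v.2) ∈ (gridGraph x y).neighborSet v :=
    Or.inr ⟨rfl, Or.inr (by show (v.1:ℕ) - 1 + 1 = v.1; omega)⟩
  have m3 : (v.1, b) ∈ (gridGraph x y).neighborSet v := Or.inl ⟨rfl, hb⟩
  refine ncard_ge_three (Set.toFinite _) m1 m2 m3 ?_ ?_ ?_
  · intro h
    have hcoe : (aR : ℕ) = (aL : ℕ) := congrArg (fun p : Fin x × Fin y => ((p.1 : ℕ))) h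
    simp only [haR, haL] at hcoe
    omega
  · intro h
    have hcoe : (aR : ℕ) = (v.1 : ℕ) := congrArg (fun p : Fin x × Fin y => ((p.1 : ℕ))) h
    simp only [haR] at hcoe
    omega
  · intro h
    have hcoe : (aL : ℕ) = (v.1 : ℕ) := congrArg (fun p : Fin x × Fin y => ((p.1 : ℕ))) h
    simp only [haL] at hcoe
    omega

/-- A cross-boundary adjacency pins down both columns and the row. -/
lemma grid_cross {x y : ℕ} {v w : Fin x × Fin y} (h : (gridGraph x y).Adj v w)
    (hv : (v.1 : ℕ) < x / 2) (hw : ¬ (w.1 : ℕ) < x / 2) :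
    (v.1 : ℕ) = x / 2 - 1 ∧ (w.1 : ℕ) = x / 2 ∧ w.2 = v.2 := by
  rcases h with ⟨h1, h2⟩ | ⟨h1, h2⟩
  · exfalso
    have : (v.1 : ℕ) = (w.1 : ℕ) := congrArg Fin.val h1
    omega
  · exact ⟨by omega, by omega, h1.symm⟩

/-- The key one-sided lemma: the agent of the "left" type never strictly profits. -/
lemma key_lemma {x y : ℕ} (hx : 4 ≤ x) (hy : 2 ≤ y) {τ : Fin x × Fin y → Bool}
    (hτ : ∀ v : Fin x × Fin y, τ v = decide ((v.1 : ℕ) < x / 2))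
    {H : SimpleGraph (Fin x × Fin y)}
    (hHG : ∀ a b, H.Adj a b → (gridGraph x y).Adj a b)
    (hdel : ∀ v, ∃ u, (gridGraph x y).neighborSet v \ H.neighborSet v ⊆ {u})
    {i j : Fin x × Fin y} (hi : τ i = true) (hj : τ j = false) :
    ¬ (utility H τ i < utility H (swapAt τ i j) j) := by
  classical
  have hij : i ≠ j := fun h => by rw [h, hj] at hi; exact Bool.noConfusion hi
  have hi' : (i.1 : ℕ) < x / 2 := by have := hτ i; rw [hi] at this; simpa using this.symm
  have hj' : ¬ (j.1 : ℕ) < x / 2 := by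
    have := hτ j; rw [hj] at this
    simpa using this.symm
  have hsub : ∀ v, H.neighborSet v ⊆ (gridGraph x y).neighborSet v := fun v w hw => hHG v w hw
  have hcard : ∀ v, ((gridGraph x y).neighborSet v).ncard ≤ (H.neighborSet v).ncard + 1 := by
    intro v
    obtain ⟨u, hu⟩ := hdel v
    have h1 : (gridGraph x y).neighborSet v ⊆ H.neighborSet v ∪ {u} := by
      intro w hw
      by_cases h : w ∈ H.neighborSet v
      · exact Or.inl h
      · exact Or.inr (hu ⟨hw, h⟩)
    calc ((gridGraph x y).neighborSet v).ncard ≤ (H.neighborSet v ∪ {u}).ncard :=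
          Set.ncard_le_ncard h1 (Set.toFinite _)
      _ ≤ (H.neighborSet v).ncard + ({u} : Set _).ncard := Set.ncard_union_le _ _
      _ = (H.neighborSet v).ncard + 1 := by rw [Set.ncard_singleton]
  -- Lower bound : 1/2 ≤ utility H τ i
  have hlow : (1 : ℚ) / 2 ≤ utility H τ i := by
    set S := H.neighborSet i with hS
    set A := S ∩ {w | τ w = τ i} with hA
    have hAS : A ⊆ S := Set.inter_subset_left
    have hdiff : ∀ w ∈ S \ A, (i.1 : ℕ) = x / 2 - 1 ∧
        (w.1 : ℕ) = x / 2 ∧ w.2 = i.2 := by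
      intro w hw
      obtain ⟨hwS, hwA⟩ := hw
      have hτw : τ w ≠ τ i := fun h => hwA ⟨hwS, h⟩
      rw [hi] at hτw
      have hw' : ¬ (w.1 : ℕ) < x / 2 := by
        have := hτ w
        intro hlt
        rw [this] at hτw
        simp [hlt] at hτw
      exact grid_cross (hsub i hwS) hi' hw'
    have hr1 : (S \ A).ncard ≤ 1 := by
      rcases Set.eq_empty_or_nonempty (S \ A) with h | h
      · simp [h]
      · obtain ⟨w0, hw0⟩ := h
        have h0 := hdiff w0 hw0
        have hsubw : S \ A ⊆ {w0} := by
          intro w hw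
          have h1 := hdiff w hw
          have : w = w0 := by
            apply Prod.ext
            · exact Fin.ext (by omega)
            · rw [h1.2.2, h0.2.2]
          exact this
        calc (S \ A).ncard ≤ ({w0} : Set _).ncard :=
              Set.ncard_le_ncard hsubw (Set.toFinite _)
          _ = 1 := Set.ncard_singleton _
    have hn1 : 1 ≤ S.ncard := by
      have hd2 := grid_deg_two (by omega : 2 ≤ x) hy i
      have hci := hcard i
      rw [← hS] at hci
      omega
    have hadd : (S \ A).ncard + A.ncard = S.ncard :=
      Set.ncard_diff_add_ncard_of_subset hAS (Set.toFinite _)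
    have hkey : S.ncard ≤ 2 * A.ncard := by
      rcases Set.eq_empty_or_nonempty (S \ A) with h | h
      · rw [h] at hadd
        simp at hadd
        omega
      · obtain ⟨w0, hw0⟩ := h
        have h0 := hdiff w0 hw0
        have hn2 : 2 ≤ S.ncard := by
          have h3 : 3 ≤ ((gridGraph x y).neighborSet i).ncard := by
            apply grid_deg_three hy
            · omega
            · omega
          have hci := hcard i
          rw [← hS] at hci
          omega
        have hr : 1 ≤ (S \ A).ncard :=
          (Set.ncard_pos (Set.toFinite _)).mpr ⟨w0, hw0⟩
        omega
    have hSne : S ≠ ∅ := by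
      intro h
      rw [h] at hn1
      simp at hn1
    rw [utility]
    rw [if_neg hSne]
    rw [div_le_div_iff₀ (by norm_num) (by exact_mod_cast Nat.lt_of_lt_of_le Nat.zero_lt_one hn1)]
    push_cast
    have : (S.ncard : ℚ) ≤ 2 * A.ncard := by exact_mod_cast hkey
    linarith
  -- Upper bound : utility H (swapAt τ i j) j ≤ 1/2
  have hup : utility H (swapAt τ i j) j ≤ 1 / 2 := by
    set σ := swapAt τ i j with hσ
    have hσj : σ j = true := by
      simp only [hσ, swapAt]
      simp [Ne.symm hij, hi]
    have hσi : σ i = false := by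
      simp only [hσ, swapAt]
      simp [hj]
    set S := H.neighborSet j with hS
    set A := S ∩ {w | σ w = σ j} with hA
    have hmem : ∀ w ∈ A, (w.1 : ℕ) = x / 2 - 1 ∧ (j.1 : ℕ) = x / 2 ∧ w.2 = j.2 := by
      intro w hw
      obtain ⟨hwS, hwσ⟩ := hw
      have hwσ' : σ w = true := by rw [Set.mem_setOf_eq] at hwσ; rw [hwσ, hσj]
      have hwne : w ≠ i := by
        intro h; rw [h, hσi] at hwσ'; exact Bool.noConfusion hwσ'
      have hwnj : w ≠ j := fun h => (gridGraph x y).loopless.irrefl j (h ▸ hsub j hwS)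
      have hτw : τ w = true := by
        rw [hσ] at hwσ'
        simpa [swapAt, hwne, hwnj] using hwσ'
      have hw' : (w.1 : ℕ) < x / 2 := by
        have := hτ w; rw [hτw] at this; simpa using this.symm
      have hadj : (gridGraph x y).Adj w j := ((gridGraph x y).adj_symm (hsub j hwS))
      obtain ⟨c1, c2, c3⟩ := grid_cross hadj hw' hj'
      exact ⟨c1, c2, c3.symm⟩
    rw [utility]
    by_cases hSe : H.neighborSet j = ∅
    · rw [if_pos hSe]; norm_num
    · rw [if_neg hSe]
      rcases Set.eq_empty_or_nonempty A with hAe | hAne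
      · have hAA : (H.neighborSet j ∩ {w | σ w = σ j}) = A := rfl
        rw [hAA, hAe]
        norm_num
      · obtain ⟨w0, hw0⟩ := hAne
        have h0 := hmem w0 hw0
        have hA1 : A.ncard ≤ 1 := by
          have hsubw : A ⊆ {w0} := by
            intro w hw
            have h1 := hmem w hw
            apply Prod.ext
            · exact Fin.ext (by omega)
            · rw [h1.2.2, h0.2.2]
          calc A.ncard ≤ ({w0} : Set _).ncard :=
                Set.ncard_le_ncard hsubw (Set.toFinite _)
            _ = 1 := Set.ncard_singleton _
        have hn2 : 2 ≤ S.ncard := by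
          have h3 : 3 ≤ ((gridGraph x y).neighborSet j).ncard := by
            apply grid_deg_three hy
            · omega
            · omega
          have hcj := hcard j
          rw [← hS] at hcj
          omega
        have : (H.neighborSet j ∩ {w | σ w = σ j}) = A := rfl
        rw [this]
        rw [div_le_div_iff₀ (by exact_mod_cast Nat.lt_of_lt_of_le Nat.zero_lt_two hn2) (by norm_num)]
        push_cast
        have h1 : (A.ncard : ℚ) ≤ 1 := by exact_mod_cast hA1
        have h2 : (2 : ℚ) ≤ S.ncard := by exact_mod_cast hn2
        linarith
  linarith


/-- On an `(x × y)`-grid with even `x ≥ 4` and `y ≥ 2`, the assignment in which the agents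
of `T1` occupy the first `x/2` columns and the agents of `T2` the remaining columns is a
swap-equilibrium and remains one after deleting any single edge (it is 1-edge-robust). -/
theorem grid_half_columns_one_edge_robust (x y : ℕ) (hx : 4 ≤ x) (hxe : Even x)
    (hy : 2 ≤ y) (τ : Fin x × Fin y → Bool)
    (hτ : ∀ v : Fin x × Fin y, τ v = decide ((v.1 : ℕ) < x / 2)) :
    IsSwapEq (gridGraph x y) τ ∧
    ∀ e : Sym2 (Fin x × Fin y), IsSwapEq ((gridGraph x y).deleteEdges {e}) τ := by
  classical
  have main : ∀ (H : SimpleGraph (Fin x × Fin y)),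
      (∀ a b, H.Adj a b → (gridGraph x y).Adj a b) →
      (∀ v, ∃ u, (gridGraph x y).neighborSet v \ H.neighborSet v ⊆ {u}) →
      IsSwapEq H τ := by
    intro H hHG hdel i j hp
    obtain ⟨hne, h1, h2⟩ := hp
    rcases Bool.eq_false_or_eq_true (τ i) with hi | hi
    · have hj : τ j = false := by
        cases h : τ j
        · rfl
        · exact absurd (hi.trans h.symm) hne
      exact key_lemma hx hy hτ hHG hdel hi hj h1
    · -- τ i = false, so τ j = true
      have hj : τ j = true := by
        cases h : τ j
        · exact absurd (hi.trans h.symm) hne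
        · rfl
      rw [swapAt_comm] at h2
      exact key_lemma hx hy hτ hHG hdel hj hi h2
  constructor
  · apply main
    · intro a b h; exact h
    · intro v
      refine ⟨(⟨0, by omega⟩, ⟨0, by omega⟩), ?_⟩
      simp
  · intro e
    refine Sym2.ind (fun p q => ?_) e
    apply main
    · intro a b h; exact h.1
    · intro v
      refine ⟨if v = p then q else p, ?_⟩
      intro w hw
      obtain ⟨hwG, hwH⟩ := hw
      have he : s(v, w) = s(p, q) := by
        by_contra hne
        exact hwH (((gridGraph x y).deleteEdges_adj).mpr ⟨hwG, by simpa using hne⟩)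
      rw [Sym2.eq_iff] at he
      rcases he with ⟨rfl, rfl⟩ | ⟨rfl, rfl⟩
      · simp
      · by_cases hvw : v = w
        · exact absurd (hvw ▸ hwG) ((gridGraph x y).loopless.irrefl w)
        · simp [hvw]
end
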